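/- Let n ≥ 1, let S be a Sperner family on {1,…,n} with Sperner statistic H_S and module h_S. Then H_S is a conservative statistic with module h_S: for every Borel probability measure μ on ℝ and every t ∈ ℝ, letting μ^n denote the n-fold product measure on ℝ^n, one has μ^n({x ∈ ℝ^n : H_S(x) ≤ t}) = h_S(μ((−∞, t])). -/
import Mathlib


open MeasureTheory

/-- The Sperner statistic of a family `S` of subsets of `{1,…,n}`:
`H_S(x) = max_{A ∈ S} min_{i ∈ A} x_i`. -/
noncomputable def spernerStat {n : ℕ} (S : Finset (Finset (Fin n))) (hS : S.Nonempty)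
    (hne : ∀ A ∈ S, A.Nonempty) (x : Fin n → ℝ) : ℝ :=
  S.attach.sup' (Finset.attach_nonempty_iff.mpr hS)
    (fun A => A.1.inf' (hne A.1 A.2) x)

/- The module of a Sperner family:
`h_S(t) = Σ_{ε ∈ {0,1}^n, H_S(ε)=0} t^{z(ε)} (1−t)^{n−z(ε)}`, where `z(ε)` is the
number of zero coordinates of `ε`. -/
open scoped Classical in
noncomputable def spernerModule {n : ℕ} (S : Finset (Finset (Fin n))) (hS : S.Nonempty)
    (hne : ∀ A ∈ S, A.Nonempty) (t : ℝ) : ℝ :=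
  ∑ ε : Fin n → Bool,
    if spernerStat S hS hne (fun i => if ε i then 1 else 0) = 0 then
      t ^ (Finset.univ.filter fun i => ε i = false).card *
        (1 - t) ^ (n - (Finset.univ.filter fun i => ε i = false).card)
    else 0

lemma spernerStat_le_iff {n : ℕ} (S : Finset (Finset (Fin n))) (hS : S.Nonempty)
    (hne : ∀ A ∈ S, A.Nonempty) (x : Fin n → ℝ) (t : ℝ) :
    spernerStat S hS hne x ≤ t ↔ ∀ A ∈ S, ∃ i ∈ A, x i ≤ t := by
  unfold spernerStat
  rw [Finset.sup'_le_iff]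
  constructor
  · intro h A hA
    have := h ⟨A, hA⟩ (Finset.mem_attach _ _)
    rwa [Finset.inf'_le_iff] at this
  · intro h A _
    rw [Finset.inf'_le_iff]
    exact h A.1 A.2

lemma spernerStat_ind_eq_zero_iff {n : ℕ} (S : Finset (Finset (Fin n))) (hS : S.Nonempty)
    (hne : ∀ A ∈ S, A.Nonempty) (ε : Fin n → Bool) :
    spernerStat S hS hne (fun i => if ε i then 1 else 0) = 0 ↔
      ∀ A ∈ S, ∃ i ∈ A, ε i = false := by
  have h0 : (0 : ℝ) ≤ spernerStat S hS hne (fun i => if ε i then 1 else 0) := by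
    obtain ⟨A, hA⟩ := hS
    refine le_trans ?_ (Finset.le_sup' _ (Finset.mem_attach _ ⟨A, hA⟩))
    refine Finset.le_inf' _ _ (fun i _ => ?_)
    split <;> norm_num
  constructor
  · intro h A hA
    obtain ⟨i, hi, hix⟩ := (spernerStat_le_iff S hS hne _ 0).mp (le_of_eq h) A hA
    refine ⟨i, hi, ?_⟩
    cases hεi : ε i with
    | false => rfl
    | true => simp [hεi] at hix; linarith
  · intro h
    refine le_antisymm ?_ h0
    rw [spernerStat_le_iff]
    intro A hA
    obtain ⟨i, hi, hif⟩ := h A hA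
    exact ⟨i, hi, by simp [hif]⟩

/-- A Sperner statistic is a conservative statistic with module `h_S`. -/
theorem sperner_statistic_is_conservative
    (n : ℕ) (hn : 1 ≤ n) (S : Finset (Finset (Fin n))) (hS : S.Nonempty)
    (hne : ∀ A ∈ S, A.Nonempty) (hsp : ∀ A ∈ S, ∀ B ∈ S, A ⊆ B → A = B)
    (μ : Measure ℝ) [IsProbabilityMeasure μ] (t : ℝ) :
    ((Measure.pi fun _ : Fin n => μ) {x | spernerStat S hS hne x ≤ t}).toReal =
      spernerModule S hS hne (μ (Set.Iic t)).toReal := by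
  classical
  set ν := Measure.pi fun _ : Fin n => μ with hν
  set p : ℝ := (μ (Set.Iic t)).toReal with hp
  set E : Bool → Set ℝ := fun b => if b then (Set.Iic t)ᶜ else Set.Iic t with hE
  set C : (Fin n → Bool) → Set (Fin n → ℝ) := fun ε => Set.univ.pi fun i => E (ε i) with hC
  have hEmeas : ∀ b, MeasurableSet (E b) := by
    intro b
    cases b <;> simp only [hE, if_true, if_false, Bool.cond_true] <;>
      first
        | exact measurableSet_Iic
        | exact measurableSet_Iic.compl
  have hCmeas : ∀ ε, MeasurableSet (C ε) := fun ε => MeasurableSet.univ_pi fun i => hEmeas _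
  set cond : (Fin n → Bool) → Prop := fun ε =>
    spernerStat S hS hne (fun i => if ε i then 1 else 0) = 0 with hcond
  set D : (Fin n → Bool) → Set (Fin n → ℝ) := fun ε => if cond ε then C ε else ∅ with hD
  have hDsub : ∀ ε, D ε ⊆ C ε := by
    intro ε
    rw [hD]
    dsimp only
    split <;> simp
  have hDmeas : ∀ ε, MeasurableSet (D ε) := by
    intro ε
    rw [hD]; dsimp only
    split
    · exact hCmeas ε
    · exact MeasurableSet.empty
  have hCdisj : ∀ ε ε' : Fin n → Bool, ε ≠ ε' → Disjoint (C ε) (C ε') := by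
    intro ε ε' hεε'
    rw [Set.disjoint_left]
    intro x hx hx'
    obtain ⟨i, hi⟩ := Function.ne_iff.mp hεε'
    have h1 := hx i (Set.mem_univ i)
    have h2 := hx' i (Set.mem_univ i)
    rw [hE] at h1 h2
    cases hεi : ε i <;> cases hεi' : ε' i <;>
      simp only [hεi, hεi', if_true, if_false, Set.mem_compl_iff, Set.mem_Iic] at h1 h2 hi <;>
      tauto
  have hset : {x | spernerStat S hS hne x ≤ t} = ⋃ ε, D ε := by
    ext x
    simp only [Set.mem_setOf_eq, Set.mem_iUnion]
    constructor
    · intro hx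
      refine ⟨fun i => decide (t < x i), ?_⟩
      have hcondε : cond (fun i => decide (t < x i)) := by
        rw [hcond]
        dsimp only
        rw [spernerStat_ind_eq_zero_iff]
        intro A hA
        obtain ⟨i, hi, hix⟩ := (spernerStat_le_iff S hS hne x t).mp hx A hA
        exact ⟨i, hi, by simp [not_lt.mpr hix]⟩
      rw [hD]
      dsimp only
      rw [if_pos hcondε, hC]
      intro i _
      rw [hE]
      by_cases h : t < x i
      · simp [h]
      · simp [h]
        exact le_of_not_gt h
    · rintro ⟨ε, hx⟩
      rw [hD] at hx
      dsimp only at hx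
      by_cases hcε : cond ε
      · rw [if_pos hcε] at hx
        rw [spernerStat_le_iff]
        intro A hA
        rw [hcond] at hcε
        obtain ⟨i, hi, hif⟩ := (spernerStat_ind_eq_zero_iff S hS hne ε).mp hcε A hA
        refine ⟨i, hi, ?_⟩
        have h2 := hx i (Set.mem_univ i)
        simp only [hE, hif] at h2
        simpa using h2
      · rw [if_neg hcε] at hx
        exact absurd hx (Set.notMem_empty x)
  have hμE : ∀ b, (μ (E b)).toReal = if b then 1 - p else p := by
    intro b
    cases b
    · simp [hE, hp]
    · have hcompl : μ ((Set.Iic t)ᶜ) = 1 - μ (Set.Iic t) := by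
        rw [measure_compl measurableSet_Iic (measure_ne_top _ _), measure_univ]
      simp only [hE, if_true]
      rw [hcompl, ENNReal.toReal_sub_of_le prob_le_one ENNReal.one_ne_top,
        ENNReal.toReal_one, hp]
  have hνC : ∀ ε : Fin n → Bool, (ν (C ε)).toReal =
      p ^ (Finset.univ.filter fun i => ε i = false).card *
        (1 - p) ^ (n - (Finset.univ.filter fun i => ε i = false).card) := by
    intro ε
    rw [hC]
    dsimp only
    rw [hν, Measure.pi_pi, ENNReal.toReal_prod]
    have : ∀ i : Fin n, (μ (E (ε i))).toReal = if ε i = false then p else 1 - p := by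
      intro i
      rw [hμE]
      cases hεi : ε i <;> simp
    rw [Finset.prod_congr rfl (fun i _ => this i)]
    rw [Finset.prod_ite, Finset.prod_const, Finset.prod_const]
    congr 1
    rw [Finset.filter_not, Finset.card_sdiff_of_subset (Finset.filter_subset _ _),
      Finset.card_univ, Fintype.card_fin]
  have hmain : ν {x | spernerStat S hS hne x ≤ t} = ∑ ε : Fin n → Bool, ν (D ε) := by
    rw [hset, measure_iUnion ?_ hDmeas, tsum_fintype]
    intro ε ε' hεε'
    exact Set.disjoint_of_subset (hDsub ε) (hDsub ε') (hCdisj ε ε' hεε')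
  rw [hmain, ENNReal.toReal_sum (fun ε _ => measure_ne_top _ _)]
  rw [spernerModule]
  refine Finset.sum_congr rfl (fun ε _ => ?_)
  rw [hD]
  dsimp only
  by_cases hcε : cond ε
  · rw [if_pos hcε, hνC ε]
    rw [hcond] at hcε
    rw [if_pos hcε]
  · rw [if_neg hcε]
    rw [hcond] at hcε
    rw [if_neg hcε]
    simp
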